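/- Let p be an odd prime and λ a self-conjugate partition whose p-rim* is all of [λ] (equivalently, whose BG-symbol has a single column (a*_0, r*_0)). Then λ is the self-conjugate hook (r*_0, 1^{r*_0 − 1}); in particular a*_0 = 2 r*_0 − 1 is odd. -/
import Mathlib


namespace Mull

/-- A partition of a natural number, encoded as the (0-indexed) weakly decreasing,
eventually-zero sequence of its row lengths.  The Young diagram of `f` is the set
of (0-indexed) nodes `(i, j)` with `j < f i`. -/
def IsPartition (f : ℕ → ℕ) : Prop :=
  Antitone f ∧ ∃ N, f N = 0

/-- The number of nonzero rows of `f`. -/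
noncomputable def len (f : ℕ → ℕ) : ℕ :=
  sInf {N | f N = 0}

/-- The size (number of nodes) of `f`. -/
noncomputable def size (f : ℕ → ℕ) : ℕ :=
  ∑ i ∈ Finset.range (len f), f i

/-- The conjugate (transpose) partition: `conj f j` is the number of rows `i`
with `f i > j`, i.e. the length of the `j`-th column. -/
noncomputable def conj (f : ℕ → ℕ) : ℕ → ℕ :=
  fun j => Nat.card {i | j < f i}

/-- A partition is self-conjugate if it equals its conjugate. -/
def SelfConj (f : ℕ → ℕ) : Prop :=
  conj f = f

/-- The hook length of `f` at the (0-indexed) node `(i, j)`: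
in 1-indexed terms this is `λ_i + λ'_j - i - j + 1`. -/
noncomputable def hook (f : ℕ → ℕ) (i j : ℕ) : ℕ :=
  f i + conj f j - i - j - 1

/-- A BG-partition: a self-conjugate partition none of whose diagonal hook lengths
is divisible by `p`. -/
def IsBG (p : ℕ) (f : ℕ → ℕ) : Prop :=
  IsPartition f ∧ SelfConj f ∧ ∀ i, i < f i → ¬ p ∣ hook f i i

/-- A partition is `p`-regular if it does not have `p` equal nonzero parts. -/
def IsRegular (p : ℕ) (f : ℕ → ℕ) : Prop :=
  ∀ i, f (i + (p - 1)) ≠ 0 → f i ≠ f (i + (p - 1))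

/-- The list of nodes of the rim of `f` (nodes `(i, j)` of the diagram such that
`(i+1, j+1)` is not in the diagram), listed from the top right to the bottom left. -/
noncomputable def rimList (f : ℕ → ℕ) : List (ℕ × ℕ) :=
  (List.range (len f)).flatMap fun i =>
    (List.range (f i - (f (i + 1) - 1))).map fun k => (i, f i - 1 - k)

/-- Auxiliary selection of the `p`-rim from the ordered list of rim nodes (with fuel):
take the next `p`-segment (the next `p` rim nodes), then, if the last selected node is
not in the bottom row, skip the remaining rim nodes lying in the row of the last
selected node and continue from the next row. -/
def pRimAux (p : ℕ) : ℕ → List (ℕ × ℕ) → List (ℕ × ℕ)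
  | 0, _ => []
  | _ + 1, [] => []
  | fuel + 1, c :: L =>
    (c :: L).take p ++
      pRimAux p fuel (((c :: L).drop p).filter
        fun d => (((c :: L).take p).getLastD c).1 < d.1)

/-- The list of nodes of the `p`-rim of `f`, from the top right to the bottom left. -/
noncomputable def pRimList (p : ℕ) (f : ℕ → ℕ) : List (ℕ × ℕ) :=
  pRimAux p (rimList f).length (rimList f)

/-- `f` minus its `p`-rim. -/
noncomputable def removeRim (p : ℕ) (f : ℕ → ℕ) : ℕ → ℕ :=
  fun i => f i - ((pRimList p f).filter fun c => c.1 = i).length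

/-- The number of columns of the Mullineux symbol of `f` (i.e. `l + 1`), namely the
number of times the `p`-rim must be removed to reach the empty partition. -/
noncomputable def steps (p : ℕ) (f : ℕ → ℕ) : ℕ :=
  sInf {k | len ((removeRim p)^[k] f) = 0}

/-- `a_i`: the number of nodes of the `p`-rim of `λ^(i)`. -/
noncomputable def aSeq (p : ℕ) (f : ℕ → ℕ) (i : ℕ) : ℕ :=
  (pRimList p ((removeRim p)^[i] f)).length

/-- `r_i`: the number of nonzero rows of `λ^(i)`. -/
noncomputable def rSeq (p : ℕ) (f : ℕ → ℕ) (i : ℕ) : ℕ :=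
  len ((removeRim p)^[i] f)

/-- `ε_i`: `0` if `p ∣ a_i` and `1` otherwise. -/
noncomputable def epsSeq (p : ℕ) (f : ℕ → ℕ) (i : ℕ) : ℕ :=
  if p ∣ aSeq p f i then 0 else 1

/-- The Mullineux symbol of `f`, recorded as the list of its columns
`(a_i, r_i)` for `0 ≤ i ≤ l`. -/
noncomputable def GSymb (p : ℕ) (f : ℕ → ℕ) : List (ℕ × ℕ) :=
  (List.range (steps p f)).map fun i => (aSeq p f i, rSeq p f i)

/-- The effect of the Mullineux map on one column of the Mullineux symbol:
`(a_i, r_i) ↦ (a_i, s_i)` where `s_i = a_i + ε_i - r_i`. -/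
def mullCol (p : ℕ) (c : ℕ × ℕ) : ℕ × ℕ :=
  (c.1, c.1 + (if p ∣ c.1 then 0 else 1) - c.2)

/-- `f` is a self-Mullineux partition: a `p`-regular partition fixed by the Mullineux
map, i.e. every column of its Mullineux symbol is fixed by `mullCol`. -/
def SelfMull (p : ℕ) (f : ℕ → ℕ) : Prop :=
  IsPartition f ∧ IsRegular p f ∧ (GSymb p f).map (mullCol p) = GSymb p f

/-- `U_λ`: the nodes of the `p`-rim lying on or above the diagonal. -/
noncomputable def UList (p : ℕ) (f : ℕ → ℕ) : List (ℕ × ℕ) :=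
  (pRimList p f).filter fun c => c.1 ≤ c.2

/-- The `p`-rim* of a self-conjugate partition: `U_λ ∪ L_λ`, where `L_λ` is the
reflection of `U_λ` across the diagonal. -/
noncomputable def rimStar (p : ℕ) (f : ℕ → ℕ) : Finset (ℕ × ℕ) :=
  (UList p f).toFinset ∪ (UList p f).toFinset.image fun c => (c.2, c.1)

/-- `a*`: the number of nodes of the `p`-rim*. -/
noncomputable def aStar (p : ℕ) (f : ℕ → ℕ) : ℕ :=
  (rimStar p f).card

/-- `r*`: the number of nodes of `U_λ`. -/
noncomputable def rStar (p : ℕ) (f : ℕ → ℕ) : ℕ :=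
  (UList p f).toFinset.card

/-- `ε* = a* mod 2`. -/
noncomputable def epsStar (p : ℕ) (f : ℕ → ℕ) : ℕ :=
  aStar p f % 2

/-- `λ^(1)*`: `f` minus its `p`-rim*. -/
noncomputable def removeRimStar (p : ℕ) (f : ℕ → ℕ) : ℕ → ℕ :=
  fun i => f i - ((rimStar p f).filter fun c => c.1 = i).card

/-- The number of columns of the BG-symbol of `f`. -/
noncomputable def stepsStar (p : ℕ) (f : ℕ → ℕ) : ℕ :=
  sInf {k | len ((removeRimStar p)^[k] f) = 0}

/-- The BG-symbol of a self-conjugate partition, recorded as the list of its columns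
`(a*_i, r*_i)` for `0 ≤ i ≤ l`. -/
noncomputable def BGSymb (p : ℕ) (f : ℕ → ℕ) : List (ℕ × ℕ) :=
  (List.range (stepsStar p f)).map fun i =>
    (aStar p ((removeRimStar p)^[i] f), rStar p ((removeRimStar p)^[i] f))

/-- The number of diagonal nodes of `f`, i.e. `max {i : λ_i ≥ i}` in 1-indexed terms. -/
noncomputable def kDiag (f : ℕ → ℕ) : ℕ :=
  Nat.card {i | i < f i}

/-- The sequence of diagonal hook lengths of `f` (padded with zeros). -/
noncomputable def diagHooks (f : ℕ → ℕ) : ℕ → ℕ :=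
  fun i => if i < f i then hook f i i else 0

/-- If `λ` is a nonempty self-conjugate partition whose `p`-rim* is all of `[λ]`
(equivalently whose BG-symbol has a single column `(a*_0, r*_0)`), then `λ` is the
self-conjugate hook `(r*_0, 1^{r*_0 - 1})`; in particular `a*_0 = 2 r*_0 - 1` is odd. -/

lemma pRimAux_subset (p : ℕ) : ∀ (fuel : ℕ) (L : List (ℕ × ℕ)), ∀ x ∈ pRimAux p fuel L, x ∈ L := by
  intro fuel
  induction fuel with
  | zero => intro L x hx; simp [pRimAux] at hx
  | succ n ih =>
    intro L x hx
    match L with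
    | [] => simp [pRimAux] at hx
    | c :: L =>
      rw [pRimAux] at hx
      rcases List.mem_append.mp hx with h | h
      · exact List.mem_of_mem_take h
      · exact List.mem_of_mem_drop (List.mem_filter.mp (ih _ x h)).1

lemma mem_rimList_spec (f : ℕ → ℕ) (a b : ℕ) (h : (a, b) ∈ rimList f) :
    ∃ k, k < f a - (f (a + 1) - 1) ∧ b = f a - 1 - k := by
  unfold rimList at h
  rcases List.mem_flatMap.mp h with ⟨i, hi, hmem⟩
  rcases List.mem_map.mp hmem with ⟨k, hk, hek⟩
  obtain ⟨rfl, rfl⟩ : i = a ∧ f i - 1 - k = b := by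
    constructor <;> [exact (Prod.mk.injEq _ _ _ _ ▸ hek).1;
      exact (Prod.mk.injEq _ _ _ _ ▸ hek).2]
  exact ⟨k, List.mem_range.mp hk, rfl⟩

lemma mem_pRimList_diagram (p : ℕ) (f : ℕ → ℕ) (a b : ℕ) (h : (a, b) ∈ pRimList p f) :
    b < f a := by
  have h' := pRimAux_subset p _ _ _ h
  obtain ⟨k, hk, rfl⟩ := mem_rimList_spec f a b h'
  omega

lemma mem_rimStar_elim {p : ℕ} {f : ℕ → ℕ} {a b : ℕ} (h : (a, b) ∈ rimStar p f) :
    ((a, b) ∈ pRimList p f ∧ a ≤ b) ∨ ((b, a) ∈ pRimList p f ∧ b ≤ a) := by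
  unfold rimStar UList at h
  rcases Finset.mem_union.mp h with h | h
  · left
    have := List.mem_filter.mp (List.mem_toFinset.mp h)
    exact ⟨this.1, by simpa using this.2⟩
  · right
    rcases Finset.mem_image.mp h with ⟨c, hc, hce⟩
    have := List.mem_filter.mp (List.mem_toFinset.mp hc)
    obtain ⟨h1, h2⟩ : c.2 = a ∧ c.1 = b := by
      constructor <;> [exact (Prod.mk.injEq _ _ _ _ ▸ hce).1;
        exact (Prod.mk.injEq _ _ _ _ ▸ hce).2]
    subst h1; subst h2
    exact ⟨this.1, by simpa using this.2⟩

lemma mem_UList_iff {p : ℕ} {f : ℕ → ℕ} {a b : ℕ} :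
    (a, b) ∈ UList p f ↔ (a, b) ∈ pRimList p f ∧ a ≤ b := by
  unfold UList
  rw [List.mem_filter]
  simp

theorem bgSymb_single_column (p : ℕ) (hp : p.Prime) (hodd : Odd p)
    (f : ℕ → ℕ) (hf : IsPartition f) (hsc : SelfConj f)
    (hne : f ≠ fun _ => 0)
    (hall : ∀ i j : ℕ, j < f i → (i, j) ∈ rimStar p f) :
    (f = fun i => if i = 0 then rStar p f else if i < rStar p f then 1 else 0) ∧
    aStar p f = 2 * rStar p f - 1 ∧ Odd (aStar p f) := by
  classical
  obtain ⟨hanti, N, hN⟩ := hf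
  -- f 0 > 0
  have hf0 : 0 < f 0 := by
    by_contra h
    push_neg at h
    apply hne; funext i
    have := hanti (Nat.zero_le i); omega
  set m := len f with hm
  have hfm : f m = 0 := by
    have hne' : {N | f N = 0}.Nonempty := ⟨N, hN⟩
    exact Nat.sInf_mem hne' 
  have hlt : ∀ i, i < m → 0 < f i := by
    intro i hi
    have : i ∉ {N | f N = 0} := Nat.notMem_of_lt_sInf hi
    simp only [Set.mem_setOf_eq] at this
    omega
  have hge : ∀ i, m ≤ i → f i = 0 := fun i hi => by
    have := hanti hi; omega
  have hm1 : 0 < m := by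
    by_contra h
    have := hge 0 (by omega); omega
  -- f 1 ≤ 1 : from (0,0) ∈ rimStar
  have hf1 : f 1 ≤ 1 := by
    have h00 := hall 0 0 hf0
    have h00' : (0, 0) ∈ pRimList p f := by
      rcases mem_rimStar_elim h00 with ⟨h, _⟩ | ⟨h, _⟩ <;> exact h
    obtain ⟨k, hk, hek⟩ := mem_rimList_spec f 0 0 (pRimAux_subset p _ _ _ h00')
    simp only [Nat.zero_add] at hk
    omega
  -- f 0 = m from self-conjugacy
  have hconj0 : conj f 0 = f 0 := congrFun hsc 0
  have hset : {i | 0 < f i} = ↑(Finset.range m) := by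
    ext i
    simp only [Set.mem_setOf_eq, Finset.coe_range, Set.mem_Iio]
    constructor
    · intro h; by_contra hc; have := hge i (by omega); omega
    · exact hlt i
  have hf0m : f 0 = m := by
    rw [← hconj0]
    unfold conj
    rw [hset]
    rw [Nat.card_coe_set_eq, Set.ncard_coe_finset, Finset.card_range]
  -- the shape of f
  have hshape : ∀ i, 0 < i → i < m → f i = 1 := by
    intro i h1 h2
    have : f i ≤ f 1 := hanti (show 1 ≤ i from h1)
    have := hlt i h2
    omega
  -- U = top row
  set A : Finset (ℕ × ℕ) := (Finset.range m).image fun j => ((0 : ℕ), j) with hA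
  have hUA : (UList p f).toFinset = A := by
    ext x
    obtain ⟨a, b⟩ := x
    rw [List.mem_toFinset, mem_UList_iff]
    constructor
    · rintro ⟨hmem, hab⟩
      have hb : b < f a := mem_pRimList_diagram p f a b hmem
      have ha0 : a = 0 := by
        by_contra hc
        have : f a ≤ 1 := le_trans (hanti (by omega : 1 ≤ a)) hf1
        omega
      subst ha0
      exact Finset.mem_image.mpr ⟨b, Finset.mem_range.mpr (by omega), rfl⟩
    · intro hmem
      rcases Finset.mem_image.mp hmem with ⟨j, hj, hje⟩
      injection hje with h1 h2
      subst h1; subst h2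
      have hb : j < f 0 := by rw [hf0m]; exact Finset.mem_range.mp hj
      rcases mem_rimStar_elim (hall 0 j hb) with ⟨h, _⟩ | ⟨h, hb0⟩
      · exact ⟨h, Nat.zero_le j⟩
      · have : j = 0 := by omega
        subst this
        exact ⟨h, le_refl 0⟩
  have hrstar : rStar p f = m := by
    unfold rStar
    rw [hUA, hA, Finset.card_image_of_injective _ (by intro x y h; simpa using h),
      Finset.card_range]
  -- rimStar = A ∪ B
  set B : Finset (ℕ × ℕ) := (Finset.range m).image fun i => (i, (0 : ℕ)) with hB
  have hAB : A.image (fun c : ℕ × ℕ => (c.2, c.1)) = B := by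
    rw [hA, hB, Finset.image_image]
    rfl
  have hrim : rimStar p f = A ∪ B := by
    unfold rimStar
    rw [hUA, hAB]
  have hABint : A ∩ B = {((0 : ℕ), (0 : ℕ))} := by
    ext x
    obtain ⟨a, b⟩ := x
    simp only [Finset.mem_inter, hA, hB, Finset.mem_image, Finset.mem_range,
      Finset.mem_singleton, Prod.mk.injEq]
    constructor
    · rintro ⟨⟨j, hj, hj1, hj2⟩, ⟨i, hi, hi1, hi2⟩⟩
      omega
    · rintro ⟨rfl, rfl⟩
      exact ⟨⟨0, hm1, rfl, rfl⟩, ⟨0, hm1, rfl, rfl⟩⟩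
  have hcardA : A.card = m := by
    rw [hA, Finset.card_image_of_injective _ (by intro x y h; simpa using h),
      Finset.card_range]
  have hcardB : B.card = m := by
    rw [hB, Finset.card_image_of_injective _ (by intro x y h; simpa using h),
      Finset.card_range]
  have hastar : aStar p f = 2 * m - 1 := by
    unfold aStar
    rw [hrim]
    have := Finset.card_union_add_card_inter A B
    rw [hABint, hcardA, hcardB, Finset.card_singleton] at this
    omega
  refine ⟨?_, by rw [hastar, hrstar], by rw [hastar]; exact ⟨m - 1, by omega⟩⟩
  funext i
  rw [hrstar]
  by_cases h0 : i = 0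
  · subst h0; simp [hf0m]
  · simp only [h0, if_false]
    by_cases h1 : i < m
    · rw [if_pos h1]; exact hshape i (by omega) h1
    · rw [if_neg h1]; exact hge i (by omega)


end Mull
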